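/- Let T_n denote the n-th Chebyshev polynomial of the first kind and suppose 4 divides n. Then for every real x with |x| ≤ 1/(2n), one has 1 − 2n²x² ≤ T_n(x) ≤ 1 − (n²/4)x². -/

import Mathlib

open Polynomial Real

/-- If `4 ∣ n` and `|x| ≤ 1/(2n)` then `1 - 2n²x² ≤ T_n(x) ≤ 1 - (n²/4)x²`. -/
theorem chebyshev_near_one (n : ℕ) (hn : 4 ∣ n) (x : ℝ) (hx : |x| ≤ 1 / (2 * n)) :
    1 - 2 * (n : ℝ) ^ 2 * x ^ 2 ≤ (Polynomial.Chebyshev.T ℝ n).eval x ∧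
      (Polynomial.Chebyshev.T ℝ n).eval x ≤ 1 - (n : ℝ) ^ 2 / 4 * x ^ 2 := by
  rcases eq_or_ne n 0 with rfl | hn0
  · norm_num [Polynomial.Chebyshev.T_zero]
  have hn1 : (1 : ℝ) ≤ n := by exact_mod_cast Nat.one_le_iff_ne_zero.2 hn0
  have hπ := Real.pi_pos
  have hπ4 := Real.pi_le_four
  -- |x| ≤ 1
  have hx1 : |x| ≤ 1 := hx.trans (by rw [div_le_one (by linarith)]; linarith)
  have hxle := abs_le.1 hx1
  set s := Real.arcsin x with hs_def
  have hsin : Real.sin s = x := Real.sin_arcsin hxle.1 hxle.2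
  have hs_half : |s| ≤ π / 2 := by
    have h := Real.arcsin_mem_Icc x
    rw [abs_le]; exact ⟨h.1, h.2⟩
  -- evaluate the Chebyshev polynomial
  have heval : (Polynomial.Chebyshev.T ℝ n).eval x = Real.cos (n * s) := by
    obtain ⟨k, hk⟩ := hn
    have hxcos : Real.cos (π / 2 - s) = x := by rw [Real.cos_pi_div_two_sub, hsin]
    have h := Polynomial.Chebyshev.T_real_cos (π / 2 - s) n
    rw [hxcos] at h
    rw [h]
    have harg : ((n : ℤ) : ℝ) * (π / 2 - s) = (k : ℤ) * (2 * π) - n * s := by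
      push_cast [hk]; ring
    rw [harg, Real.cos_int_mul_two_pi_sub]
  -- bound s² by x²
  have hx2s : x ^ 2 ≤ s ^ 2 := by
    have := Real.sin_sq_le_sq (x := s); rwa [hsin] at this
  have hs2x : s ^ 2 ≤ 4 * x ^ 2 := by
    have h := Real.mul_le_sin (abs_nonneg s) hs_half
    have h' := mul_le_mul h h (by positivity) (Real.sin_nonneg_of_nonneg_of_le_pi
      (abs_nonneg s) (by linarith))
    have hsinabs : Real.sin |s| * Real.sin |s| = x ^ 2 := by
      rcases abs_cases s with ⟨h1, _⟩ | ⟨h1, _⟩ <;> rw [h1] <;>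
        simp [Real.sin_neg, hsin] <;> ring
    rw [hsinabs] at h'
    have : (2 / π * |s|) * (2 / π * |s|) = 4 / π ^ 2 * s ^ 2 := by
      rw [← sq_abs s]; ring
    rw [this, div_mul_eq_mul_div, div_le_iff₀ (by positivity)] at h'
    have hπ2 : π ^ 2 ≤ 16 := by nlinarith
    have := mul_le_mul_of_nonneg_left hπ2 (sq_nonneg x)
    nlinarith
  -- x² ≤ 1/(4n²)
  have hx2 : (n : ℝ) ^ 2 * x ^ 2 ≤ 1 / 4 := by
    have h := mul_le_mul hx hx (abs_nonneg x) (by positivity)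
    rw [abs_mul_abs_self] at h
    have hn0' : (0 : ℝ) < n := by linarith
    rw [show (1 / (2 * (n:ℝ))) * (1 / (2 * n)) = 1 / (4 * n ^ 2) by ring] at h
    rw [show x * x = x ^ 2 by ring] at h
    calc (n : ℝ) ^ 2 * x ^ 2 ≤ (n : ℝ) ^ 2 * (1 / (4 * n ^ 2)) := by
          apply mul_le_mul_of_nonneg_left h (by positivity)
      _ = 1 / 4 := by field_simp
  set t : ℝ := n * s with ht_def
  have ht_eq : t ^ 2 = (n : ℝ) ^ 2 * s ^ 2 := by rw [ht_def]; ring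
  have hmul1 := mul_le_mul_of_nonneg_left hs2x (sq_nonneg (n : ℝ))
  have hmul2 := mul_le_mul_of_nonneg_left hx2s (sq_nonneg (n : ℝ))
  have ht2 : t ^ 2 ≤ 1 := by linarith [ht_eq, hmul1, hx2]
  have htabs : |t| ≤ 1 := abs_le.2 ⟨by linarith [sq_nonneg (t + 1), ht2],
    by linarith [sq_nonneg (t - 1), ht2]⟩
  have ht_lower : (n : ℝ) ^ 2 * x ^ 2 ≤ t ^ 2 := by linarith [ht_eq, hmul2]
  have ht_upper : t ^ 2 ≤ 4 * (n : ℝ) ^ 2 * x ^ 2 := by linarith [ht_eq, hmul1]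
  rw [heval]
  constructor
  · have h := Real.one_sub_sq_div_two_le_cos (x := t)
    linarith
  · have hc := Real.cos_bound htabs
    have hc' := (abs_le.1 hc).2
    have h4 : |t| ^ 4 ≤ t ^ 2 := by
      have he : |t| ^ 4 = (t ^ 2) ^ 2 := by rw [← sq_abs t]; ring
      rw [he]
      nlinarith [sq_nonneg t, ht2]
    linarith
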